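/- For Φ(u,r,t;v,ρ) := (u−v)² − (b/2)²(4r²ρ² − (r²+ρ²−t²)²), define the tangent vector fields T¹ := ∂_{(u,r,t)}Φ, T² with components T²_j := det[∂_{(v,ρ)}Φ, ∂_{(v,ρ)}∂_{x_j}Φ] for x = (u,r,t), and S := S¹ − S², where S¹_j and S²_j are the 3×3 bordered determinants S¹_j := det[[0, (∂_{(v,ρ)}Φ)ᵀ],[∂_{(v,ρ)}Φ, ∂²_{(v,ρ)(v,ρ)}∂_{x_j}Φ]] and S²_j := det[[0, (∂_{(v,ρ)}∂_{x_j}Φ)ᵀ],[∂_{(v,ρ)}Φ, ∂²_{(v,ρ)(v,ρ)}Φ]]. Then the cinematic curvature Cin(Φ) := det[S, T¹, T²] satisfies, at every point with Φ(u,r,t;v,ρ) = 0: Cin(Φ)(u,r,t;v,ρ) = 64·b⁸·r³·t³·ρ³·(r² − t²). -/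

import Mathlib

/-- The defining function Φ(u,r,t;v,ρ) = (u−v)² − (b/2)²(4r²ρ² − (r²+ρ²−t²)²). -/
noncomputable def Phi (b u r t v ρ : ℝ) : ℝ :=
  (u - v) ^ 2 - (b / 2) ^ 2 * (4 * r ^ 2 * ρ ^ 2 - (r ^ 2 + ρ ^ 2 - t ^ 2) ^ 2)

/-- ∂_u Φ -/
noncomputable def Pu (b u r t v ρ : ℝ) : ℝ := deriv (fun u' => Phi b u' r t v ρ) u
/-- ∂_r Φ -/
noncomputable def Pr (b u r t v ρ : ℝ) : ℝ := deriv (fun r' => Phi b u r' t v ρ) r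
/-- ∂_t Φ -/
noncomputable def Pt (b u r t v ρ : ℝ) : ℝ := deriv (fun t' => Phi b u r t' v ρ) t
/-- ∂_v Φ -/
noncomputable def Pv (b u r t v ρ : ℝ) : ℝ := deriv (fun v' => Phi b u r t v' ρ) v
/-- ∂_ρ Φ -/
noncomputable def Pp (b u r t v ρ : ℝ) : ℝ := deriv (fun ρ' => Phi b u r t v ρ') ρ
/-- ∂²_{uv} Φ -/
noncomputable def Puv (b u r t v ρ : ℝ) : ℝ := deriv (fun u' => Pv b u' r t v ρ) u
/-- ∂²_{uρ} Φ -/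
noncomputable def Pup (b u r t v ρ : ℝ) : ℝ := deriv (fun u' => Pp b u' r t v ρ) u
/-- ∂²_{rv} Φ -/
noncomputable def Prv (b u r t v ρ : ℝ) : ℝ := deriv (fun r' => Pv b u r' t v ρ) r
/-- ∂²_{rρ} Φ -/
noncomputable def Prp (b u r t v ρ : ℝ) : ℝ := deriv (fun r' => Pp b u r' t v ρ) r
/-- ∂²_{tv} Φ -/
noncomputable def Ptv (b u r t v ρ : ℝ) : ℝ := deriv (fun t' => Pv b u r t' v ρ) t
/-- ∂²_{tρ} Φ -/
noncomputable def Ptp (b u r t v ρ : ℝ) : ℝ := deriv (fun t' => Pp b u r t' v ρ) t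
/-- ∂²_{vv} Φ -/
noncomputable def Pvv (b u r t v ρ : ℝ) : ℝ := deriv (fun v' => Pv b u r t v' ρ) v
/-- ∂²_{vρ} Φ -/
noncomputable def Pvp (b u r t v ρ : ℝ) : ℝ := deriv (fun v' => Pp b u r t v' ρ) v
/-- ∂²_{ρv} Φ -/
noncomputable def Ppv (b u r t v ρ : ℝ) : ℝ := deriv (fun ρ' => Pv b u r t v ρ') ρ
/-- ∂²_{ρρ} Φ -/
noncomputable def Ppp (b u r t v ρ : ℝ) : ℝ := deriv (fun ρ' => Pp b u r t v ρ') ρ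

/-- ∂_v of the (u,r,t)-partials of Φ. -/
noncomputable def Pvu (b u r t v ρ : ℝ) : ℝ := deriv (fun v' => Pu b u r t v' ρ) v
noncomputable def Pvr (b u r t v ρ : ℝ) : ℝ := deriv (fun v' => Pr b u r t v' ρ) v
noncomputable def Pvt (b u r t v ρ : ℝ) : ℝ := deriv (fun v' => Pt b u r t v' ρ) v
/-- ∂_ρ of the (u,r,t)-partials of Φ. -/
noncomputable def Ppu (b u r t v ρ : ℝ) : ℝ := deriv (fun ρ' => Pu b u r t v ρ') ρ
noncomputable def Ppr (b u r t v ρ : ℝ) : ℝ := deriv (fun ρ' => Pr b u r t v ρ') ρ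
noncomputable def Ppt (b u r t v ρ : ℝ) : ℝ := deriv (fun ρ' => Pt b u r t v ρ') ρ

/-- second (v,ρ)-derivatives of ∂_uΦ -/
noncomputable def Puvv (b u r t v ρ : ℝ) : ℝ :=
  deriv (fun v1 => deriv (fun v2 => Pu b u r t v2 ρ) v1) v
noncomputable def Puvp (b u r t v ρ : ℝ) : ℝ :=
  deriv (fun v' => deriv (fun ρ' => Pu b u r t v' ρ') ρ) v
noncomputable def Pupv (b u r t v ρ : ℝ) : ℝ :=
  deriv (fun ρ' => deriv (fun v' => Pu b u r t v' ρ') v) ρ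
noncomputable def Pupp (b u r t v ρ : ℝ) : ℝ :=
  deriv (fun ρ1 => deriv (fun ρ2 => Pu b u r t v ρ2) ρ1) ρ
/-- second (v,ρ)-derivatives of ∂_rΦ -/
noncomputable def Prvv (b u r t v ρ : ℝ) : ℝ :=
  deriv (fun v1 => deriv (fun v2 => Pr b u r t v2 ρ) v1) v
noncomputable def Prvp (b u r t v ρ : ℝ) : ℝ :=
  deriv (fun v' => deriv (fun ρ' => Pr b u r t v' ρ') ρ) v
noncomputable def Prpv (b u r t v ρ : ℝ) : ℝ :=
  deriv (fun ρ' => deriv (fun v' => Pr b u r t v' ρ') v) ρ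
noncomputable def Prpp (b u r t v ρ : ℝ) : ℝ :=
  deriv (fun ρ1 => deriv (fun ρ2 => Pr b u r t v ρ2) ρ1) ρ
/-- second (v,ρ)-derivatives of ∂_tΦ -/
noncomputable def Ptvv (b u r t v ρ : ℝ) : ℝ :=
  deriv (fun v1 => deriv (fun v2 => Pt b u r t v2 ρ) v1) v
noncomputable def Ptvp (b u r t v ρ : ℝ) : ℝ :=
  deriv (fun v' => deriv (fun ρ' => Pt b u r t v' ρ') ρ) v
noncomputable def Ptpv (b u r t v ρ : ℝ) : ℝ :=
  deriv (fun ρ' => deriv (fun v' => Pt b u r t v' ρ') v) ρ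
noncomputable def Ptpp (b u r t v ρ : ℝ) : ℝ :=
  deriv (fun ρ1 => deriv (fun ρ2 => Pt b u r t v ρ2) ρ1) ρ

/-- T²_j = det[∂_{(v,ρ)}Φ, ∂_{(v,ρ)}∂_{x_j}Φ], for x_j = u, r, t. -/
noncomputable def T2u (b u r t v ρ : ℝ) : ℝ :=
  Matrix.det !![Pv b u r t v ρ, Pvu b u r t v ρ; Pp b u r t v ρ, Ppu b u r t v ρ]
noncomputable def T2r (b u r t v ρ : ℝ) : ℝ :=
  Matrix.det !![Pv b u r t v ρ, Pvr b u r t v ρ; Pp b u r t v ρ, Ppr b u r t v ρ]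
noncomputable def T2t (b u r t v ρ : ℝ) : ℝ :=
  Matrix.det !![Pv b u r t v ρ, Pvt b u r t v ρ; Pp b u r t v ρ, Ppt b u r t v ρ]

/-- S¹_j, the first bordered determinant. -/
noncomputable def S1u (b u r t v ρ : ℝ) : ℝ :=
  Matrix.det !![0, Pv b u r t v ρ, Pp b u r t v ρ;
                Pv b u r t v ρ, Puvv b u r t v ρ, Puvp b u r t v ρ;
                Pp b u r t v ρ, Pupv b u r t v ρ, Pupp b u r t v ρ]
noncomputable def S1r (b u r t v ρ : ℝ) : ℝ :=
  Matrix.det !![0, Pv b u r t v ρ, Pp b u r t v ρ;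
                Pv b u r t v ρ, Prvv b u r t v ρ, Prvp b u r t v ρ;
                Pp b u r t v ρ, Prpv b u r t v ρ, Prpp b u r t v ρ]
noncomputable def S1t (b u r t v ρ : ℝ) : ℝ :=
  Matrix.det !![0, Pv b u r t v ρ, Pp b u r t v ρ;
                Pv b u r t v ρ, Ptvv b u r t v ρ, Ptvp b u r t v ρ;
                Pp b u r t v ρ, Ptpv b u r t v ρ, Ptpp b u r t v ρ]

/-- S²_j, the second bordered determinant. -/
noncomputable def S2u (b u r t v ρ : ℝ) : ℝ :=
  Matrix.det !![0, Pvu b u r t v ρ, Ppu b u r t v ρ;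
                Pv b u r t v ρ, Pvv b u r t v ρ, Pvp b u r t v ρ;
                Pp b u r t v ρ, Ppv b u r t v ρ, Ppp b u r t v ρ]
noncomputable def S2r (b u r t v ρ : ℝ) : ℝ :=
  Matrix.det !![0, Pvr b u r t v ρ, Ppr b u r t v ρ;
                Pv b u r t v ρ, Pvv b u r t v ρ, Pvp b u r t v ρ;
                Pp b u r t v ρ, Ppv b u r t v ρ, Ppp b u r t v ρ]
noncomputable def S2t (b u r t v ρ : ℝ) : ℝ :=
  Matrix.det !![0, Pvt b u r t v ρ, Ppt b u r t v ρ;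
                Pv b u r t v ρ, Pvv b u r t v ρ, Pvp b u r t v ρ;
                Pp b u r t v ρ, Ppv b u r t v ρ, Ppp b u r t v ρ]

theorem my_det_fin_three_of (a b c d e f g h i : ℝ) :
    Matrix.det !![a, b, c; d, e, f; g, h, i]
      = a * e * i - a * f * h - b * d * i + b * f * g + c * d * h - c * e * g := by
  simp [Matrix.det_fin_three]

theorem deriv_quartic (A B C D E x : ℝ) :
    deriv (fun y : ℝ => A + B * y + C * y ^ 2 + D * y ^ 3 + E * y ^ 4) x
      = B + 2 * C * x + 3 * D * x ^ 2 + 4 * E * x ^ 3 := by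
  have h : HasDerivAt (fun y : ℝ => A + B * y + C * y ^ 2 + D * y ^ 3 + E * y ^ 4)
      (B + 2 * C * x + 3 * D * x ^ 2 + 4 * E * x ^ 3) x := by
    have h1 : HasDerivAt (fun y : ℝ => y) 1 x := hasDerivAt_id x
    have h2 := hasDerivAt_pow 2 x
    have h3 := hasDerivAt_pow 3 x
    have h4 := hasDerivAt_pow 4 x
    have H := ((((hasDerivAt_const x A).add (h1.const_mul B)).add (h2.const_mul C)).add
      (h3.const_mul D)).add (h4.const_mul E)
    refine H.congr_deriv ?_
    push_cast; ring
  exact h.deriv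

theorem Pu_eq (b u r t v ρ : ℝ) : Pu b u r t v ρ = (-2*v + 2*u) := by
  unfold Pu
  have h1 : (fun u' => Phi b u' r t v ρ) = (fun x : ℝ => (1*v^2 + (1/4)*b^2*ρ^4 + (-1/2)*b^2*t^2*ρ^2 + (1/4)*b^2*t^4 + (-1/2)*b^2*r^2*ρ^2 + (-1/2)*b^2*r^2*t^2 + (1/4)*b^2*r^4) + (-2*v) * x + (1) * x ^ 2 + 0 * x ^ 3 + 0 * x ^ 4) := funext fun x => by
    unfold Phi; ring
  rw [h1, deriv_quartic]; ring

theorem Pr_eq (b u r t v ρ : ℝ) : Pr b u r t v ρ = (-1*b^2*r*ρ^2 + -1*b^2*r*t^2 + 1*b^2*r^3) := by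
  unfold Pr
  have h1 : (fun r' => Phi b u r' t v ρ) = (fun x : ℝ => (1*v^2 + -2*u*v + 1*u^2 + (1/4)*b^2*ρ^4 + (-1/2)*b^2*t^2*ρ^2 + (1/4)*b^2*t^4) + 0 * x + ((-1/2)*b^2*ρ^2 + (-1/2)*b^2*t^2) * x ^ 2 + 0 * x ^ 3 + ((1/4)*b^2) * x ^ 4) := funext fun x => by
    unfold Phi; ring
  rw [h1, deriv_quartic]; ring

theorem Pt_eq (b u r t v ρ : ℝ) : Pt b u r t v ρ = (-1*b^2*t*ρ^2 + 1*b^2*t^3 + -1*b^2*r^2*t) := by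
  unfold Pt
  have h1 : (fun t' => Phi b u r t' v ρ) = (fun x : ℝ => (1*v^2 + -2*u*v + 1*u^2 + (1/4)*b^2*ρ^4 + (-1/2)*b^2*r^2*ρ^2 + (1/4)*b^2*r^4) + 0 * x + ((-1/2)*b^2*ρ^2 + (-1/2)*b^2*r^2) * x ^ 2 + 0 * x ^ 3 + ((1/4)*b^2) * x ^ 4) := funext fun x => by
    unfold Phi; ring
  rw [h1, deriv_quartic]; ring

theorem Pv_eq (b u r t v ρ : ℝ) : Pv b u r t v ρ = (2*v + -2*u) := by
  unfold Pv
  have h1 : (fun v' => Phi b u r t v' ρ) = (fun x : ℝ => (1*u^2 + (1/4)*b^2*ρ^4 + (-1/2)*b^2*t^2*ρ^2 + (1/4)*b^2*t^4 + (-1/2)*b^2*r^2*ρ^2 + (-1/2)*b^2*r^2*t^2 + (1/4)*b^2*r^4) + (-2*u) * x + (1) * x ^ 2 + 0 * x ^ 3 + 0 * x ^ 4) := funext fun x => by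
    unfold Phi; ring
  rw [h1, deriv_quartic]; ring

theorem Pp_eq (b u r t v ρ : ℝ) : Pp b u r t v ρ = (1*b^2*ρ^3 + -1*b^2*t^2*ρ + -1*b^2*r^2*ρ) := by
  unfold Pp
  have h1 : (fun ρ' => Phi b u r t v ρ') = (fun x : ℝ => (1*v^2 + -2*u*v + 1*u^2 + (1/4)*b^2*t^4 + (-1/2)*b^2*r^2*t^2 + (1/4)*b^2*r^4) + 0 * x + ((-1/2)*b^2*t^2 + (-1/2)*b^2*r^2) * x ^ 2 + 0 * x ^ 3 + ((1/4)*b^2) * x ^ 4) := funext fun x => by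
    unfold Phi; ring
  rw [h1, deriv_quartic]; ring

theorem Puv_eq (b u r t v ρ : ℝ) : Puv b u r t v ρ = (-2) := by
  unfold Puv
  have h1 : (fun u' => Pv b u' r t v ρ) = (fun x : ℝ => (2*v) + (-2) * x + 0 * x ^ 2 + 0 * x ^ 3 + 0 * x ^ 4) := funext fun x => by
    rw [Pv_eq]; ring
  rw [h1, deriv_quartic]; ring

theorem Pup_eq (b u r t v ρ : ℝ) : Pup b u r t v ρ = 0 := by
  unfold Pup
  have h1 : (fun u' => Pp b u' r t v ρ) = (fun x : ℝ => (1*b^2*ρ^3 + -1*b^2*t^2*ρ + -1*b^2*r^2*ρ) + 0 * x + 0 * x ^ 2 + 0 * x ^ 3 + 0 * x ^ 4) := funext fun x => by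
    rw [Pp_eq]; ring
  rw [h1, deriv_quartic]; ring

theorem Prv_eq (b u r t v ρ : ℝ) : Prv b u r t v ρ = 0 := by
  unfold Prv
  have h1 : (fun r' => Pv b u r' t v ρ) = (fun x : ℝ => (2*v + -2*u) + 0 * x + 0 * x ^ 2 + 0 * x ^ 3 + 0 * x ^ 4) := funext fun x => by
    rw [Pv_eq]; ring
  rw [h1, deriv_quartic]; ring

theorem Prp_eq (b u r t v ρ : ℝ) : Prp b u r t v ρ = (-2*b^2*r*ρ) := by
  unfold Prp
  have h1 : (fun r' => Pp b u r' t v ρ) = (fun x : ℝ => (1*b^2*ρ^3 + -1*b^2*t^2*ρ) + 0 * x + (-1*b^2*ρ) * x ^ 2 + 0 * x ^ 3 + 0 * x ^ 4) := funext fun x => by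
    rw [Pp_eq]; ring
  rw [h1, deriv_quartic]; ring

theorem Ptv_eq (b u r t v ρ : ℝ) : Ptv b u r t v ρ = 0 := by
  unfold Ptv
  have h1 : (fun t' => Pv b u r t' v ρ) = (fun x : ℝ => (2*v + -2*u) + 0 * x + 0 * x ^ 2 + 0 * x ^ 3 + 0 * x ^ 4) := funext fun x => by
    rw [Pv_eq]; ring
  rw [h1, deriv_quartic]; ring

theorem Ptp_eq (b u r t v ρ : ℝ) : Ptp b u r t v ρ = (-2*b^2*t*ρ) := by
  unfold Ptp
  have h1 : (fun t' => Pp b u r t' v ρ) = (fun x : ℝ => (1*b^2*ρ^3 + -1*b^2*r^2*ρ) + 0 * x + (-1*b^2*ρ) * x ^ 2 + 0 * x ^ 3 + 0 * x ^ 4) := funext fun x => by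
    rw [Pp_eq]; ring
  rw [h1, deriv_quartic]; ring

theorem Pvv_eq (b u r t v ρ : ℝ) : Pvv b u r t v ρ = (2) := by
  unfold Pvv
  have h1 : (fun v' => Pv b u r t v' ρ) = (fun x : ℝ => (-2*u) + (2) * x + 0 * x ^ 2 + 0 * x ^ 3 + 0 * x ^ 4) := funext fun x => by
    rw [Pv_eq]; ring
  rw [h1, deriv_quartic]; ring

theorem Pvp_eq (b u r t v ρ : ℝ) : Pvp b u r t v ρ = 0 := by
  unfold Pvp
  have h1 : (fun v' => Pp b u r t v' ρ) = (fun x : ℝ => (1*b^2*ρ^3 + -1*b^2*t^2*ρ + -1*b^2*r^2*ρ) + 0 * x + 0 * x ^ 2 + 0 * x ^ 3 + 0 * x ^ 4) := funext fun x => by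
    rw [Pp_eq]; ring
  rw [h1, deriv_quartic]; ring

theorem Ppv_eq (b u r t v ρ : ℝ) : Ppv b u r t v ρ = 0 := by
  unfold Ppv
  have h1 : (fun ρ' => Pv b u r t v ρ') = (fun x : ℝ => (2*v + -2*u) + 0 * x + 0 * x ^ 2 + 0 * x ^ 3 + 0 * x ^ 4) := funext fun x => by
    rw [Pv_eq]; ring
  rw [h1, deriv_quartic]; ring

theorem Ppp_eq (b u r t v ρ : ℝ) : Ppp b u r t v ρ = (3*b^2*ρ^2 + -1*b^2*t^2 + -1*b^2*r^2) := by
  unfold Ppp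
  have h1 : (fun ρ' => Pp b u r t v ρ') = (fun x : ℝ => 0 + (-1*b^2*t^2 + -1*b^2*r^2) * x + 0 * x ^ 2 + (1*b^2) * x ^ 3 + 0 * x ^ 4) := funext fun x => by
    rw [Pp_eq]; ring
  rw [h1, deriv_quartic]; ring

theorem Pvu_eq (b u r t v ρ : ℝ) : Pvu b u r t v ρ = (-2) := by
  unfold Pvu
  have h1 : (fun v' => Pu b u r t v' ρ) = (fun x : ℝ => (2*u) + (-2) * x + 0 * x ^ 2 + 0 * x ^ 3 + 0 * x ^ 4) := funext fun x => by
    rw [Pu_eq]; ring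
  rw [h1, deriv_quartic]; ring

theorem Pvr_eq (b u r t v ρ : ℝ) : Pvr b u r t v ρ = 0 := by
  unfold Pvr
  have h1 : (fun v' => Pr b u r t v' ρ) = (fun x : ℝ => (-1*b^2*r*ρ^2 + -1*b^2*r*t^2 + 1*b^2*r^3) + 0 * x + 0 * x ^ 2 + 0 * x ^ 3 + 0 * x ^ 4) := funext fun x => by
    rw [Pr_eq]; ring
  rw [h1, deriv_quartic]; ring

theorem Pvt_eq (b u r t v ρ : ℝ) : Pvt b u r t v ρ = 0 := by
  unfold Pvt
  have h1 : (fun v' => Pt b u r t v' ρ) = (fun x : ℝ => (-1*b^2*t*ρ^2 + 1*b^2*t^3 + -1*b^2*r^2*t) + 0 * x + 0 * x ^ 2 + 0 * x ^ 3 + 0 * x ^ 4) := funext fun x => by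
    rw [Pt_eq]; ring
  rw [h1, deriv_quartic]; ring

theorem Ppu_eq (b u r t v ρ : ℝ) : Ppu b u r t v ρ = 0 := by
  unfold Ppu
  have h1 : (fun ρ' => Pu b u r t v ρ') = (fun x : ℝ => (-2*v + 2*u) + 0 * x + 0 * x ^ 2 + 0 * x ^ 3 + 0 * x ^ 4) := funext fun x => by
    rw [Pu_eq]; ring
  rw [h1, deriv_quartic]; ring

theorem Ppr_eq (b u r t v ρ : ℝ) : Ppr b u r t v ρ = (-2*b^2*r*ρ) := by
  unfold Ppr
  have h1 : (fun ρ' => Pr b u r t v ρ') = (fun x : ℝ => (-1*b^2*r*t^2 + 1*b^2*r^3) + 0 * x + (-1*b^2*r) * x ^ 2 + 0 * x ^ 3 + 0 * x ^ 4) := funext fun x => by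
    rw [Pr_eq]; ring
  rw [h1, deriv_quartic]; ring

theorem Ppt_eq (b u r t v ρ : ℝ) : Ppt b u r t v ρ = (-2*b^2*t*ρ) := by
  unfold Ppt
  have h1 : (fun ρ' => Pt b u r t v ρ') = (fun x : ℝ => (1*b^2*t^3 + -1*b^2*r^2*t) + 0 * x + (-1*b^2*t) * x ^ 2 + 0 * x ^ 3 + 0 * x ^ 4) := funext fun x => by
    rw [Pt_eq]; ring
  rw [h1, deriv_quartic]; ring

theorem Puvv_eq (b u r t v ρ : ℝ) : Puvv b u r t v ρ = 0 := by
  unfold Puvv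
  have h1 : (fun v2 => Pu b u r t v2 ρ) = (fun x : ℝ => (2*u) + (-2) * x + 0 * x ^ 2 + 0 * x ^ 3 + 0 * x ^ 4) := funext fun x => by
    rw [Pu_eq]; ring
  have h2 : (fun v1 => deriv (fun v2 => Pu b u r t v2 ρ) v1) = (fun x : ℝ => (-2) + 0 * x + 0 * x ^ 2 + 0 * x ^ 3 + 0 * x ^ 4) := by
    funext y; rw [h1, deriv_quartic]; ring
  rw [h2, deriv_quartic]; ring

theorem Pupp_eq (b u r t v ρ : ℝ) : Pupp b u r t v ρ = 0 := by
  unfold Pupp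
  have h1 : (fun ρ2 => Pu b u r t v ρ2) = (fun x : ℝ => (-2*v + 2*u) + 0 * x + 0 * x ^ 2 + 0 * x ^ 3 + 0 * x ^ 4) := funext fun x => by
    rw [Pu_eq]; ring
  have h2 : (fun ρ1 => deriv (fun ρ2 => Pu b u r t v ρ2) ρ1) = (fun x : ℝ => 0 + 0 * x + 0 * x ^ 2 + 0 * x ^ 3 + 0 * x ^ 4) := by
    funext y; rw [h1, deriv_quartic]; ring
  rw [h2, deriv_quartic]; ring

theorem Puvp_eq (b u r t v ρ : ℝ) : Puvp b u r t v ρ = 0 := by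
  unfold Puvp
  have h2 : (fun v' => deriv (fun ρ' => Pu b u r t v' ρ') ρ) = (fun x : ℝ => 0 + 0 * x + 0 * x ^ 2 + 0 * x ^ 3 + 0 * x ^ 4) := by
    funext y
    have h1 : (fun ρ' => Pu b u r t y ρ') = (fun x : ℝ => (-2*y + 2*u) + 0 * x + 0 * x ^ 2 + 0 * x ^ 3 + 0 * x ^ 4) := funext fun x => by
      rw [Pu_eq]; ring
    rw [h1, deriv_quartic]; ring
  rw [h2, deriv_quartic]; ring

theorem Pupv_eq (b u r t v ρ : ℝ) : Pupv b u r t v ρ = 0 := by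
  unfold Pupv
  have h2 : (fun ρ' => deriv (fun v' => Pu b u r t v' ρ') v) = (fun x : ℝ => (-2) + 0 * x + 0 * x ^ 2 + 0 * x ^ 3 + 0 * x ^ 4) := by
    funext y
    have h1 : (fun v' => Pu b u r t v' y) = (fun x : ℝ => (2*u) + (-2) * x + 0 * x ^ 2 + 0 * x ^ 3 + 0 * x ^ 4) := funext fun x => by
      rw [Pu_eq]; ring
    rw [h1, deriv_quartic]; ring
  rw [h2, deriv_quartic]; ring

theorem Prvv_eq (b u r t v ρ : ℝ) : Prvv b u r t v ρ = 0 := by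
  unfold Prvv
  have h1 : (fun v2 => Pr b u r t v2 ρ) = (fun x : ℝ => (-1*b^2*r*ρ^2 + -1*b^2*r*t^2 + 1*b^2*r^3) + 0 * x + 0 * x ^ 2 + 0 * x ^ 3 + 0 * x ^ 4) := funext fun x => by
    rw [Pr_eq]; ring
  have h2 : (fun v1 => deriv (fun v2 => Pr b u r t v2 ρ) v1) = (fun x : ℝ => 0 + 0 * x + 0 * x ^ 2 + 0 * x ^ 3 + 0 * x ^ 4) := by
    funext y; rw [h1, deriv_quartic]; ring
  rw [h2, deriv_quartic]; ring

theorem Prpp_eq (b u r t v ρ : ℝ) : Prpp b u r t v ρ = (-2*b^2*r) := by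
  unfold Prpp
  have h1 : (fun ρ2 => Pr b u r t v ρ2) = (fun x : ℝ => (-1*b^2*r*t^2 + 1*b^2*r^3) + 0 * x + (-1*b^2*r) * x ^ 2 + 0 * x ^ 3 + 0 * x ^ 4) := funext fun x => by
    rw [Pr_eq]; ring
  have h2 : (fun ρ1 => deriv (fun ρ2 => Pr b u r t v ρ2) ρ1) = (fun x : ℝ => 0 + (-2*b^2*r) * x + 0 * x ^ 2 + 0 * x ^ 3 + 0 * x ^ 4) := by
    funext y; rw [h1, deriv_quartic]; ring
  rw [h2, deriv_quartic]; ring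

theorem Prvp_eq (b u r t v ρ : ℝ) : Prvp b u r t v ρ = 0 := by
  unfold Prvp
  have h2 : (fun v' => deriv (fun ρ' => Pr b u r t v' ρ') ρ) = (fun x : ℝ => (-2*b^2*r*ρ) + 0 * x + 0 * x ^ 2 + 0 * x ^ 3 + 0 * x ^ 4) := by
    funext y
    have h1 : (fun ρ' => Pr b u r t y ρ') = (fun x : ℝ => (-1*b^2*r*t^2 + 1*b^2*r^3) + 0 * x + (-1*b^2*r) * x ^ 2 + 0 * x ^ 3 + 0 * x ^ 4) := funext fun x => by
      rw [Pr_eq]; ring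
    rw [h1, deriv_quartic]; ring
  rw [h2, deriv_quartic]; ring

theorem Prpv_eq (b u r t v ρ : ℝ) : Prpv b u r t v ρ = 0 := by
  unfold Prpv
  have h2 : (fun ρ' => deriv (fun v' => Pr b u r t v' ρ') v) = (fun x : ℝ => 0 + 0 * x + 0 * x ^ 2 + 0 * x ^ 3 + 0 * x ^ 4) := by
    funext y
    have h1 : (fun v' => Pr b u r t v' y) = (fun x : ℝ => (-1*b^2*r*y^2 + -1*b^2*r*t^2 + 1*b^2*r^3) + 0 * x + 0 * x ^ 2 + 0 * x ^ 3 + 0 * x ^ 4) := funext fun x => by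
      rw [Pr_eq]; ring
    rw [h1, deriv_quartic]; ring
  rw [h2, deriv_quartic]; ring

theorem Ptvv_eq (b u r t v ρ : ℝ) : Ptvv b u r t v ρ = 0 := by
  unfold Ptvv
  have h1 : (fun v2 => Pt b u r t v2 ρ) = (fun x : ℝ => (-1*b^2*t*ρ^2 + 1*b^2*t^3 + -1*b^2*r^2*t) + 0 * x + 0 * x ^ 2 + 0 * x ^ 3 + 0 * x ^ 4) := funext fun x => by
    rw [Pt_eq]; ring
  have h2 : (fun v1 => deriv (fun v2 => Pt b u r t v2 ρ) v1) = (fun x : ℝ => 0 + 0 * x + 0 * x ^ 2 + 0 * x ^ 3 + 0 * x ^ 4) := by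
    funext y; rw [h1, deriv_quartic]; ring
  rw [h2, deriv_quartic]; ring

theorem Ptpp_eq (b u r t v ρ : ℝ) : Ptpp b u r t v ρ = (-2*b^2*t) := by
  unfold Ptpp
  have h1 : (fun ρ2 => Pt b u r t v ρ2) = (fun x : ℝ => (1*b^2*t^3 + -1*b^2*r^2*t) + 0 * x + (-1*b^2*t) * x ^ 2 + 0 * x ^ 3 + 0 * x ^ 4) := funext fun x => by
    rw [Pt_eq]; ring
  have h2 : (fun ρ1 => deriv (fun ρ2 => Pt b u r t v ρ2) ρ1) = (fun x : ℝ => 0 + (-2*b^2*t) * x + 0 * x ^ 2 + 0 * x ^ 3 + 0 * x ^ 4) := by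
    funext y; rw [h1, deriv_quartic]; ring
  rw [h2, deriv_quartic]; ring

theorem Ptvp_eq (b u r t v ρ : ℝ) : Ptvp b u r t v ρ = 0 := by
  unfold Ptvp
  have h2 : (fun v' => deriv (fun ρ' => Pt b u r t v' ρ') ρ) = (fun x : ℝ => (-2*b^2*t*ρ) + 0 * x + 0 * x ^ 2 + 0 * x ^ 3 + 0 * x ^ 4) := by
    funext y
    have h1 : (fun ρ' => Pt b u r t y ρ') = (fun x : ℝ => (1*b^2*t^3 + -1*b^2*r^2*t) + 0 * x + (-1*b^2*t) * x ^ 2 + 0 * x ^ 3 + 0 * x ^ 4) := funext fun x => by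
      rw [Pt_eq]; ring
    rw [h1, deriv_quartic]; ring
  rw [h2, deriv_quartic]; ring

theorem Ptpv_eq (b u r t v ρ : ℝ) : Ptpv b u r t v ρ = 0 := by
  unfold Ptpv
  have h2 : (fun ρ' => deriv (fun v' => Pt b u r t v' ρ') v) = (fun x : ℝ => 0 + 0 * x + 0 * x ^ 2 + 0 * x ^ 3 + 0 * x ^ 4) := by
    funext y
    have h1 : (fun v' => Pt b u r t v' y) = (fun x : ℝ => (-1*b^2*t*y^2 + 1*b^2*t^3 + -1*b^2*r^2*t) + 0 * x + 0 * x ^ 2 + 0 * x ^ 3 + 0 * x ^ 4) := funext fun x => by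
      rw [Pt_eq]; ring
    rw [h1, deriv_quartic]; ring
  rw [h2, deriv_quartic]; ring

/-- On the zero set of Φ, the cinematic curvature Cin(Φ) = det[S, T¹, T²]
(columns S = S¹ − S², T¹ = ∂_{(u,r,t)}Φ, T²) equals 64b⁸r³t³ρ³(r²−t²). -/
theorem statement16 (b u r t v ρ : ℝ) (hΦ : Phi b u r t v ρ = 0) :
    (Matrix.transpose
      !![S1u b u r t v ρ - S2u b u r t v ρ,
         S1r b u r t v ρ - S2r b u r t v ρ,
         S1t b u r t v ρ - S2t b u r t v ρ;
         Pu b u r t v ρ, Pr b u r t v ρ, Pt b u r t v ρ;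
         T2u b u r t v ρ, T2r b u r t v ρ, T2t b u r t v ρ]).det
      = 64 * b ^ 8 * r ^ 3 * t ^ 3 * ρ ^ 3 * (r ^ 2 - t ^ 2) := by
  rw [Matrix.det_transpose]
  simp only [T2u, T2r, T2t, S1u, S1r, S1t, S2u, S2r, S2t,
    my_det_fin_three_of, Matrix.det_fin_two_of,
    Pu_eq, Pr_eq, Pt_eq, Pv_eq, Pp_eq, Puv_eq, Pup_eq, Prv_eq, Prp_eq, Ptv_eq, Ptp_eq, Pvv_eq, Pvp_eq, Ppv_eq, Ppp_eq, Pvu_eq, Pvr_eq, Pvt_eq, Ppu_eq, Ppr_eq, Ppt_eq, Puvv_eq, Puvp_eq, Pupv_eq, Pupp_eq, Prvv_eq, Prvp_eq, Prpv_eq, Prpp_eq, Ptvv_eq, Ptvp_eq, Ptpv_eq, Ptpp_eq,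
    Matrix.cons_val', Matrix.cons_val_zero, Matrix.cons_val_one, Matrix.cons_val_two,
    Matrix.tail_cons, Matrix.head_cons, Matrix.head_fin_const, Matrix.cons_val_fin_one, Matrix.empty_val']
  unfold Phi at hΦ
  linear_combination ((-64*b^6*r*t^3*ρ^3 + 64*b^6*r^3*t*ρ^3)) * hΦ
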